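/- arXiv:1505.08128 — 2 statements merged into one kernel-verified Lean document; each statement's English description precedes it below -/
import Mathlib

section
/- Let A be an n×n real matrix all of whose leading principal minors are positive. Then there exists an n×n diagonal matrix D with positive diagonal entries such that all eigenvalues of D·A are real, positive, and simple. -/
open Polynomial Matrix

private lemma my_prod_neg {α : Type*} (s : Finset α) (f : α → ℝ) :
    ∏ i ∈ s, (-f i) = (-1) ^ s.card * ∏ i ∈ s, f i := by
  induction s using Finset.cons_induction with
  | empty => simp
  | cons a s ha ih => rw [Finset.prod_cons, Finset.prod_cons, ih, Finset.card_cons, pow_succ]; ring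

private lemma card_filter_lt (m j : ℕ) (hj : j ≤ m) :
    (Finset.univ.filter (fun i : Fin m => (i : ℕ) < j)).card = j := by
  rw [← Fintype.card_fin j]
  apply Finset.card_bij' (fun (i : Fin m) hi => (⟨(i : ℕ), by simpa using hi⟩ : Fin j))
    (fun (i : Fin j) _ => Fin.castLE hj i)
  · intro i hi; simp
  · intro i hi; simp [Fin.ext_iff]
  · intro i hi; simp [Fin.ext_iff]
  · intro i hi; simp

private lemma prod_sub_sign {m j : ℕ} (hj : j ≤ m) (μ : Fin m → ℝ) (x : ℝ)
    (h1 : ∀ i : Fin m, (i : ℕ) < j → μ i < x) (h2 : ∀ i : Fin m, j ≤ (i : ℕ) → x < μ i) :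
    0 < (-1) ^ (m - j) * ∏ i, (x - μ i) := by
  classical
  rw [← Finset.prod_filter_mul_prod_filter_not Finset.univ (fun i : Fin m => (i : ℕ) < j)]
  have hc1 : (Finset.univ.filter (fun i : Fin m => (i : ℕ) < j)).card = j := card_filter_lt m j hj
  have hc2 : (Finset.univ.filter (fun i : Fin m => ¬ (i : ℕ) < j)).card = m - j := by
    have := Finset.card_filter_add_card_filter_not (s := (Finset.univ : Finset (Fin m)))
      (p := fun i : Fin m => (i : ℕ) < j)
    simp only [Finset.card_univ, Fintype.card_fin] at this
    omega
  have hpos1 : 0 < ∏ i ∈ Finset.univ.filter (fun i : Fin m => (i : ℕ) < j), (x - μ i) :=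
    Finset.prod_pos fun i hi => by
      have := h1 i (by simpa using hi); linarith
  have hneg : ∏ i ∈ Finset.univ.filter (fun i : Fin m => ¬ (i : ℕ) < j), (x - μ i)
      = (-1) ^ (m - j) * ∏ i ∈ Finset.univ.filter (fun i : Fin m => ¬ (i : ℕ) < j), (μ i - x) := by
    rw [← hc2, ← my_prod_neg]
    apply Finset.prod_congr rfl
    intro i _; ring
  have hpos2 : 0 < ∏ i ∈ Finset.univ.filter (fun i : Fin m => ¬ (i : ℕ) < j), (μ i - x) :=
    Finset.prod_pos fun i hi => by
      have := h2 i (by simpa using (Finset.mem_filter.mp hi).2); linarith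
  rw [hneg]
  have hsq : ((-1 : ℝ) ^ (m - j)) * ((-1 : ℝ) ^ (m - j)) = 1 := by
    rw [← pow_add]
    exact Even.neg_one_pow ⟨m - j, rfl⟩
  calc (0:ℝ) < ((-1 : ℝ) ^ (m - j)) * ((-1 : ℝ) ^ (m - j)) *
      ((∏ i ∈ Finset.univ.filter (fun i : Fin m => (i : ℕ) < j), (x - μ i)) *
       (∏ i ∈ Finset.univ.filter (fun i : Fin m => ¬ (i : ℕ) < j), (μ i - x))) := by
        rw [hsq, one_mul]; exact mul_pos hpos1 hpos2
    _ = (-1) ^ (m - j) * ((∏ i ∈ Finset.univ.filter (fun i : Fin m => (i : ℕ) < j), (x - μ i)) *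
        ((-1) ^ (m - j) * ∏ i ∈ Finset.univ.filter (fun i : Fin m => ¬ (i : ℕ) < j), (μ i - x))) := by
        ring

private lemma sign_transfer (k : ℕ) (a b : ℝ) (h : 0 < (-1) ^ k * a) (hab : |b - a| < |a|) :
    0 < (-1) ^ k * b := by
  rcases Nat.even_or_odd k with hk | hk
  · rw [hk.neg_one_pow, one_mul] at h ⊢
    rw [abs_of_pos h] at hab
    have := abs_lt.mp hab
    linarith [this.1]
  · rw [hk.neg_one_pow, neg_one_mul, neg_pos] at h
    rw [hk.neg_one_pow, neg_one_mul, neg_pos]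
    rw [abs_of_neg h] at hab
    have := abs_lt.mp hab
    linarith [this.2]

private lemma factor_of_alternating {m : ℕ} (p : Polynomial ℝ) (hm : p.Monic)
    (hd : p.natDegree = m) (x : Fin (m + 1) → ℝ)
    (hx : ∀ j : Fin m, x j.castSucc < x j.succ)
    (hs : ∀ j : Fin (m + 1), 0 < (-1) ^ (m - (j : ℕ)) * p.eval (x j)) :
    ∃ r : Fin m → ℝ, StrictMono r ∧ (∀ j, x j.castSucc < r j) ∧
      p = ∏ j, (X - C (r j)) := by
  classical
  have key : ∀ j : Fin m, ∃ r, r ∈ Set.Ioo (x j.castSucc) (x j.succ) ∧ p.eval r = 0 := by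
    intro j
    have h1 := hs j.castSucc
    have h2 := hs j.succ
    have hj : (j : ℕ) < m := j.isLt
    have hvc : ((j.castSucc : Fin (m+1)) : ℕ) = (j : ℕ) := rfl
    have hvs : ((j.succ : Fin (m+1)) : ℕ) = (j : ℕ) + 1 := rfl
    rw [hvc] at h1; rw [hvs] at h2
    have hmj : m - (j : ℕ) = (m - ((j : ℕ) + 1)) + 1 := by omega
    rw [hmj, pow_succ] at h1
    set k := m - ((j : ℕ) + 1) with hk
    have hcont : ContinuousOn (fun t => p.eval t) (Set.Icc (x j.castSucc) (x j.succ)) :=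
      (Polynomial.continuous p).continuousOn
    rcases Nat.even_or_odd k with hke | hko
    · rw [hke.neg_one_pow, one_mul] at h1 h2
      have ha : p.eval (x j.castSucc) < 0 := by nlinarith
      have h0mem : (0:ℝ) ∈ Set.Ioo (p.eval (x j.castSucc)) (p.eval (x j.succ)) := ⟨ha, h2⟩
      obtain ⟨r, hr, hr0⟩ := intermediate_value_Ioo (le_of_lt (hx j)) hcont h0mem
      exact ⟨r, hr, hr0⟩
    · rw [hko.neg_one_pow] at h1 h2
      have ha : 0 < p.eval (x j.castSucc) := by nlinarith
      have hb : p.eval (x j.succ) < 0 := by nlinarith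
      have h0mem : (0:ℝ) ∈ Set.Ioo (p.eval (x j.succ)) (p.eval (x j.castSucc)) := ⟨hb, ha⟩
      obtain ⟨r, hr, hr0⟩ := intermediate_value_Ioo' (le_of_lt (hx j)) hcont h0mem
      exact ⟨r, hr, hr0⟩
  choose r hr1 hr2 using key
  have hrgt : ∀ j, x j.castSucc < r j := fun j => (hr1 j).1
  have hrlt : ∀ j, r j < x j.succ := fun j => (hr1 j).2
  have hrmono : StrictMono r := by
    rcases m with _ | m'
    · intro a; exact a.elim0
    · rw [Fin.strictMono_iff_lt_succ]
      intro i
      calc r i.castSucc < x i.castSucc.succ := hrlt i.castSucc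
        _ = x i.succ.castSucc := by rw [Fin.succ_castSucc]
        _ < r i.succ := hrgt i.succ
  have hne : p ≠ 0 := hm.ne_zero
  set S : Multiset ℝ := Multiset.map r Finset.univ.val with hS
  have hcardS : Multiset.card S = m := by simp [hS]
  have hle : S ≤ p.roots := by
    rw [Multiset.le_iff_count]
    intro a
    by_cases ha : a ∈ S
    · obtain ⟨j, _, rfl⟩ := Multiset.mem_map.mp ha
      have hnodup : S.Nodup := Multiset.Nodup.map hrmono.injective Finset.univ.nodup
      rw [Multiset.count_eq_one_of_mem hnodup ha, Polynomial.count_roots]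
      exact (Polynomial.rootMultiplicity_pos hne).mpr (hr2 j)
    · rw [Multiset.count_eq_zero_of_notMem ha]; exact Nat.zero_le _
  have hroots : p.roots = S := by
    refine (Multiset.eq_of_le_of_card_le hle ?_).symm
    rw [hcardS, ← hd]
    exact p.card_roots'
  have hsplit : p.Splits :=
    Polynomial.splits_iff_card_roots.mpr (by rw [hroots, hcardS, hd])
  refine ⟨r, hrmono, hrgt, ?_⟩
  rw [hsplit.eq_prod_roots_of_monic hm, hroots, hS, Multiset.map_map]
  rfl

private lemma ff_aux : ∀ n : ℕ, ∀ A : Matrix (Fin n) (Fin n) ℝ,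
    (∀ k (h : k ≤ n), 0 < (A.submatrix (Fin.castLE h) (Fin.castLE h)).det) →
    ∃ d : Fin n → ℝ, (∀ i, 0 < d i) ∧
      ∃ f : Fin n → ℝ, Function.Injective f ∧ (∀ i, 0 < f i) ∧
        (Matrix.diagonal d * A).charpoly =
          ∏ i : Fin n, (Polynomial.X - Polynomial.C (f i)) := by
  intro n
  induction n with
  | zero =>
    intro A _
    refine ⟨fun i => i.elim0, fun i => i.elim0, fun i => i.elim0,
      Function.injective_of_subsingleton _, fun i => i.elim0, ?_⟩
    simp [Matrix.charpoly, Matrix.det_isEmpty]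
  | succ n ih =>
    intro A hminors
    classical
    set A' : Matrix (Fin n) (Fin n) ℝ :=
      A.submatrix (Fin.castLE (Nat.le_succ n)) (Fin.castLE (Nat.le_succ n)) with hA'
    have hminors' : ∀ k (h : k ≤ n),
        0 < (A'.submatrix (Fin.castLE h) (Fin.castLE h)).det := by
      intro k h
      have h2 := hminors k (h.trans (Nat.le_succ n))
      have heq : A'.submatrix (Fin.castLE h) (Fin.castLE h)
          = A.submatrix (Fin.castLE (h.trans (Nat.le_succ n))) (Fin.castLE (h.trans (Nat.le_succ n))) := by
        rw [hA', Matrix.submatrix_submatrix]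
        congr 1 <;> · funext i; exact Fin.castLE_castLE _ _ _
      rw [heq]; exact h2
    obtain ⟨d', hd', f', hf'inj, hf'pos, hchar'⟩ := ih A' hminors'
    -- sort the roots
    set σ := Tuple.sort f' with hσ
    set lam : Fin n → ℝ := f' ∘ σ with hlam
    have hlam_mono : StrictMono lam :=
      (Tuple.monotone_sort f').strictMono_of_injective (hf'inj.comp σ.injective)
    have hlam_pos : ∀ i, 0 < lam i := fun i => hf'pos _
    have hprod_eq : ∏ i, (X - C (f' i)) = ∏ i, (X - C (lam i)) :=
      (Equiv.prod_comp σ fun i => X - C (f' i)).symm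
    -- extended root list μ (with 0 prepended)
    set μ : Fin (n + 1) → ℝ := Fin.cons 0 lam with hμ
    have hμ0 : μ 0 = 0 := rfl
    have hμmono : StrictMono μ := by
      intro a b hab
      induction b using Fin.cases with
      | zero => exact absurd hab (Fin.not_lt_zero a)
      | succ jb =>
        induction a using Fin.cases with
        | zero => simpa [hμ, Fin.cons_succ, Fin.cons_zero] using hlam_pos jb
        | succ ja =>
          simp only [hμ, Fin.cons_succ]
          exact hlam_mono (Fin.succ_lt_succ_iff.mp hab)
    -- perturbed matrices
    set M : ℝ → Matrix (Fin (n + 1)) (Fin (n + 1)) ℝ :=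
      fun ε => Matrix.diagonal (Fin.snoc d' ε) * A with hM
    set p0 : Polynomial ℝ := (M 0).charpoly with hp0def
    set q : Polynomial ℝ :=
      ((M 0).charmatrix.updateRow (Fin.last n) (fun j => C (A (Fin.last n) j))).det with hqdef
    have hcharm : ∀ ε : ℝ, (M ε).charmatrix = (M 0).charmatrix.updateRow (Fin.last n)
        ((M 0).charmatrix (Fin.last n) + (-(C ε)) • (fun j => C (A (Fin.last n) j))) := by
      intro ε
      refine Matrix.ext fun i j => ?_
      by_cases hi : i = Fin.last n
      · subst hi
        rw [Matrix.updateRow_self]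
        simp only [Matrix.charmatrix_apply, hM, Matrix.diagonal_mul,
          Fin.snoc_last, Pi.add_apply, Pi.smul_apply, smul_eq_mul, zero_mul, map_zero,
          sub_zero, Polynomial.C_mul]
        ring
      · rw [Matrix.updateRow_ne hi]
        obtain ⟨i', rfl⟩ := Fin.eq_castSucc_of_ne_last hi
        simp only [Matrix.charmatrix_apply, hM, Matrix.diagonal_mul, Fin.snoc_castSucc]
    have hpe : ∀ ε : ℝ, (M ε).charpoly = p0 - C ε * q := by
      intro ε
      show ((M ε).charmatrix).det = _
      rw [hcharm ε, Matrix.det_updateRow_add, Matrix.det_updateRow_smul,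
        Matrix.updateRow_eq_self]
      show (M 0).charpoly + _ = _
      rw [← hqdef, ← hp0def]
      ring
    -- p0 = X * prod of (X - lam i)
    have hsub : ((M 0).charmatrix).submatrix (Fin.last n).succAbove (Fin.last n).succAbove
        = (Matrix.diagonal d' * A').charmatrix := by
      refine Matrix.ext fun i j => ?_
      rw [Fin.succAbove_last]
      simp only [Matrix.submatrix_apply, Matrix.charmatrix_apply, hM, Matrix.diagonal_mul,
        Fin.snoc_castSucc, hA', Matrix.submatrix_apply]
      congr 1
      simp [Matrix.diagonal_apply, Fin.castSucc_inj]
    have hlastrow : ∀ j : Fin (n + 1), (M 0) (Fin.last n) j = 0 := by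
      intro j
      simp [hM, Matrix.diagonal_mul, Fin.snoc_last]
    have hp0 : p0 = X * ∏ i, (X - C (lam i)) := by
      rw [hp0def]
      show ((M 0).charmatrix).det = _
      rw [Matrix.det_succ_row _ (Fin.last n)]
      rw [Finset.sum_eq_single (Fin.last n)]
      · rw [hsub]
        have h1 : (M 0).charmatrix (Fin.last n) (Fin.last n) = X := by
          rw [Matrix.charmatrix_apply, hlastrow, map_zero, sub_zero]
          simp [Matrix.diagonal_apply]
        rw [h1]
        have h2 : ((-1 : ℝ[X])) ^ ((Fin.last n : ℕ) + (Fin.last n : ℕ)) = 1 :=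
          Even.neg_one_pow ⟨n, by simp [Fin.val_last]⟩
        rw [h2, one_mul]
        show X * (Matrix.diagonal d' * A').charpoly = _
        rw [hchar', hprod_eq]
      · intro j _ hj
        have h1 : (M 0).charmatrix (Fin.last n) j = 0 := by
          rw [Matrix.charmatrix_apply, hlastrow, map_zero, sub_zero]
          simp [Matrix.diagonal_apply, (Ne.symm hj)]
        rw [h1]
        ring
      · intro h; exact absurd (Finset.mem_univ _) h
    have hp0' : p0 = ∏ i : Fin (n + 1), (X - C (μ i)) := by
      rw [Fin.prod_univ_succ, hμ]
      simp only [Fin.cons_zero, Fin.cons_succ, map_zero, sub_zero]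
      rw [hp0]
    have hevalp0 : ∀ t : ℝ, p0.eval t = ∏ i, (t - μ i) := by
      intro t
      rw [hp0']
      simp [Polynomial.eval_prod]
    -- determinant positivity
    have hdetA : 0 < A.det := by
      have h2 := hminors (n + 1) le_rfl
      have heq : A.submatrix (Fin.castLE (le_refl (n + 1))) (Fin.castLE (le_refl (n + 1))) = A := by
        refine Matrix.ext fun i j => ?_
        congr 1
      rw [heq] at h2; exact h2
    have hdetM : ∀ ε : ℝ, 0 < ε → 0 < (M ε).det := by
      intro ε he
      rw [hM]
      show 0 < (Matrix.diagonal (Fin.snoc d' ε) * A).det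
      rw [Matrix.det_mul, Matrix.det_diagonal, Fin.prod_snoc]
      exact mul_pos (mul_pos (Finset.prod_pos fun i _ => hd' i) he) hdetA
    have heval0 : ∀ ε : ℝ, 0 < ε → 0 < (-1 : ℝ) ^ (n + 1) * ((M ε).charpoly.eval 0) := by
      intro ε he
      have h1 := Matrix.det_eq_sign_charpoly_coeff (M ε)
      rw [Polynomial.coeff_zero_eq_eval_zero, Fintype.card_fin] at h1
      rw [← h1]
      exact hdetM ε he
    -- interleaving points
    set x : Fin (n + 2) → ℝ := fun j =>
      if hj0 : (j : ℕ) = 0 then 0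
      else if hjn : (j : ℕ) ≤ n then
        (μ ⟨(j : ℕ) - 1, by omega⟩ + μ ⟨(j : ℕ), by omega⟩) / 2
      else μ (Fin.last n) + 1 with hx
    have hx0 : x 0 = 0 := by simp [hx]
    have hxin : ∀ j : Fin (n + 1),
        (∀ i : Fin (n + 1), (i : ℕ) < (j : ℕ) + 1 → μ i < x j.succ) ∧
        (∀ i : Fin (n + 1), (j : ℕ) + 1 ≤ (i : ℕ) → x j.succ < μ i) := by
      intro j
      have hjsval : ((j.succ : Fin (n + 2)) : ℕ) = (j : ℕ) + 1 := rfl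
      by_cases hjn : (j : ℕ) + 1 ≤ n
      · have hxval : x j.succ =
            (μ ⟨(j : ℕ), by omega⟩ + μ ⟨(j : ℕ) + 1, by omega⟩) / 2 := by
          rw [hx]
          simp only [hjsval]
          rw [dif_neg (by omega), dif_pos hjn]
          simp
        have hlt : μ ⟨(j : ℕ), by omega⟩ < μ ⟨(j : ℕ) + 1, by omega⟩ :=
          hμmono (by rw [Fin.lt_def]; show (j : ℕ) < (j : ℕ) + 1; omega)
        constructor
        · intro i hi
          have hle : μ i ≤ μ ⟨(j : ℕ), by omega⟩ :=
            hμmono.monotone (by rw [Fin.le_def]; show (i : ℕ) ≤ (j : ℕ); omega)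
          rw [hxval]; linarith
        · intro i hi
          have hle : μ ⟨(j : ℕ) + 1, by omega⟩ ≤ μ i :=
            hμmono.monotone (by rw [Fin.le_def]; show (j : ℕ) + 1 ≤ (i : ℕ); omega)
          rw [hxval]; linarith
      · have hj' : (j : ℕ) = n := by have := j.isLt; omega
        have hxval : x j.succ = μ (Fin.last n) + 1 := by
          rw [hx]
          simp only [hjsval]
          rw [dif_neg (by omega), dif_neg (by omega)]
        constructor
        · intro i hi
          have hle : μ i ≤ μ (Fin.last n) := hμmono.monotone (Fin.le_last i)
          rw [hxval]; linarith
        · intro i hi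
          exfalso
          have := i.isLt; omega
    have hxcast : ∀ j : Fin (n + 1), x j.castSucc ≤ μ ⟨(j : ℕ), j.isLt⟩ := by
      intro j
      have hjcval : ((j.castSucc : Fin (n + 2)) : ℕ) = (j : ℕ) := rfl
      by_cases hj0 : (j : ℕ) = 0
      · have h1 : x j.castSucc = 0 := by rw [hx]; simp only [hjcval]; rw [dif_pos hj0]
        rw [h1]
        have h2 : (⟨(j : ℕ), j.isLt⟩ : Fin (n + 1)) = 0 := by
          apply Fin.ext; simp [hj0]
        rw [h2, hμ0]
      · have hjn : (j : ℕ) ≤ n := by have := j.isLt; omega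
        have h1 : x j.castSucc = (μ ⟨(j : ℕ) - 1, by omega⟩ + μ ⟨(j : ℕ), by omega⟩) / 2 := by
          rw [hx]; simp only [hjcval]; rw [dif_neg hj0, dif_pos hjn]
        have hlt : μ ⟨(j : ℕ) - 1, by omega⟩ < μ ⟨(j : ℕ), by omega⟩ :=
          hμmono (by rw [Fin.lt_def]; show (j : ℕ) - 1 < (j : ℕ); omega)
        rw [h1]
        linarith
    have hxlt : ∀ j : Fin (n + 1), x j.castSucc < x j.succ := by
      intro j
      have h1 := hxcast j
      have h2 := (hxin j).1 ⟨(j : ℕ), j.isLt⟩ (by simp)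
      linarith
    have hsign0 : ∀ j : Fin (n + 1),
        0 < (-1 : ℝ) ^ ((n + 1) - ((j : ℕ) + 1)) * p0.eval (x j.succ) := by
      intro j
      rw [hevalp0]
      exact prod_sub_sign (by omega) μ _ (hxin j).1 (hxin j).2
    have hp0ne : ∀ j : Fin (n + 1), p0.eval (x j.succ) ≠ 0 := by
      intro j h
      have := hsign0 j
      rw [h, mul_zero] at this
      exact lt_irrefl 0 this
    -- choice of epsilon
    set S : Fin (n + 1) → ℝ :=
      fun j => |p0.eval (x j.succ)| / (|q.eval (x j.succ)| + 1) with hSdef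
    have hSpos : ∀ j, 0 < S j := fun j =>
      div_pos (abs_pos.mpr (hp0ne j)) (by positivity)
    set ε : ℝ := (Finset.univ.inf' Finset.univ_nonempty S) / 2 with hεdef
    have hεpos : 0 < ε := by
      apply half_pos
      rw [Finset.lt_inf'_iff]
      exact fun j _ => hSpos j
    have hεle : ∀ j, ε ≤ S j / 2 := by
      intro j
      have := Finset.inf'_le S (Finset.mem_univ j)
      rw [hεdef]
      linarith
    have hbound : ∀ j : Fin (n + 1),
        |((M ε).charpoly).eval (x j.succ) - p0.eval (x j.succ)| < |p0.eval (x j.succ)| := by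
      intro j
      rw [hpe ε]
      have h1 : (p0 - C ε * q).eval (x j.succ) - p0.eval (x j.succ) = -(ε * q.eval (x j.succ)) := by
        simp [Polynomial.eval_sub, Polynomial.eval_mul]
      rw [h1, abs_neg, abs_mul, abs_of_pos hεpos]
      have h2 : ε ≤ S j / 2 := hεle j
      have hq0 : (0:ℝ) ≤ |q.eval (x j.succ)| := abs_nonneg _
      have hp : 0 < |p0.eval (x j.succ)| := abs_pos.mpr (hp0ne j)
      have h3 : S j * |q.eval (x j.succ)| ≤ |p0.eval (x j.succ)| := by
        rw [hSdef]
        rw [div_mul_eq_mul_div, div_le_iff₀ (by positivity)]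
        nlinarith
      nlinarith
    have hsign : ∀ j : Fin (n + 2),
        0 < (-1 : ℝ) ^ ((n + 1) - (j : ℕ)) * ((M ε).charpoly).eval (x j) := by
      intro j
      induction j using Fin.cases with
      | zero =>
        rw [hx0]
        simpa using heval0 ε hεpos
      | succ j =>
        have h1 := hsign0 j
        have h2 := hbound j
        have h3 : ((j.succ : Fin (n + 2)) : ℕ) = (j : ℕ) + 1 := rfl
        rw [h3]
        exact sign_transfer _ _ _ h1 h2
    obtain ⟨r, hrmono, hrgt, hrfac⟩ := factor_of_alternating ((M ε).charpoly)
      (Matrix.charpoly_monic _)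
      (by rw [Matrix.charpoly_natDegree_eq_dim, Fintype.card_fin]) x hxlt hsign
    have hxmono : StrictMono x := Fin.strictMono_iff_lt_succ.mpr hxlt
    refine ⟨Fin.snoc d' ε, ?_, r, hrmono.injective, ?_, ?_⟩
    · intro i
      induction i using Fin.lastCases with
      | last => rw [Fin.snoc_last]; exact hεpos
      | cast i => rw [Fin.snoc_castSucc]; exact hd' i
    · intro i
      have h1 : (0:ℝ) = x 0 := hx0.symm
      have h2 : x 0 ≤ x i.castSucc := hxmono.monotone (Fin.zero_le _)
      have h3 := hrgt i
      linarith
    · exact hrfac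


/-- Fisher–Fuller theorem: if all leading principal minors of a real `n × n`
matrix `A` are positive, there is a positive diagonal matrix `D` such that all
eigenvalues of `D * A` are real, positive and simple (the characteristic
polynomial splits into distinct positive real linear factors). -/
theorem fisher_fuller (n : ℕ) (A : Matrix (Fin n) (Fin n) ℝ)
    (hminors : ∀ k (h : k ≤ n),
      0 < (A.submatrix (Fin.castLE h) (Fin.castLE h)).det) :
    ∃ d : Fin n → ℝ, (∀ i, 0 < d i) ∧
      ∃ f : Fin n → ℝ, Function.Injective f ∧ (∀ i, 0 < f i) ∧
        (Matrix.diagonal d * A).charpoly =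
          ∏ i : Fin n, (Polynomial.X - Polynomial.C (f i)) := by
  exact ff_aux n A hminors
end

section
/- Let A be an n×n real matrix all of whose leading principal minors are nonzero. Then there exists an n×n real diagonal matrix D such that all eigenvalues of D·A have positive real part. -/
open Matrix

lemma exists_LU : ∀ (n : ℕ) (A : Matrix (Fin n) (Fin n) ℝ),
    (∀ k (h : k ≤ n), (A.submatrix (Fin.castLE h) (Fin.castLE h)).det ≠ 0) →
    ∃ L U : Matrix (Fin n) (Fin n) ℝ,
      (∀ i j : Fin n, i < j → L i j = 0) ∧ (∀ i, L i i = 1) ∧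
      (∀ i j : Fin n, j < i → U i j = 0) ∧ (∀ i, U i i ≠ 0) ∧ A = L * U := by
  intro n
  induction n with
  | zero =>
    intro A _
    exact ⟨1, 1, fun i => i.elim0, fun i => i.elim0, fun i => i.elim0, fun i => i.elim0,
      Subsingleton.elim _ _⟩
  | succ n ih =>
    intro A hm
    set e : Fin n ⊕ Fin 1 ≃ Fin (n + 1) := finSumFinEquiv with he
    set A' : Matrix (Fin n) (Fin n) ℝ :=
      A.submatrix (Fin.castLE n.le_succ) (Fin.castLE n.le_succ) with hA'def
    have hm' : ∀ k (h : k ≤ n),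
        (A'.submatrix (Fin.castLE h) (Fin.castLE h)).det ≠ 0 := by
      intro k h
      rw [hA'def, submatrix_submatrix]
      have hc : Fin.castLE n.le_succ ∘ Fin.castLE h = Fin.castLE (h.trans n.le_succ) :=
        funext fun i => Fin.ext rfl
      rw [hc]
      exact hm k (h.trans n.le_succ)
    obtain ⟨L', U', hL't, hL'd, hU't, hU'd, hA'⟩ := ih A' hm'
    have hdetL' : L'.det = 1 := by
      rw [Matrix.det_of_lowerTriangular L' (fun i j hij => hL't i j hij)]
      simp [hL'd]
    have hdetU' : U'.det ≠ 0 := by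
      rw [Matrix.det_of_upperTriangular (fun i j hij => hU't i j hij)]
      exact Finset.prod_ne_zero_iff.2 fun i _ => hU'd i
    have hL'u : IsUnit L'.det := by rw [hdetL']; exact isUnit_one
    have hU'u : IsUnit U'.det := hdetU'.isUnit
    set Bcol : Matrix (Fin n) (Fin 1) ℝ := fun i _ => A (e (Sum.inl i)) (e (Sum.inr 0)) with hBcol
    set Crow : Matrix (Fin 1) (Fin n) ℝ := fun _ j => A (e (Sum.inr 0)) (e (Sum.inl j)) with hCrow
    set Dm : Matrix (Fin 1) (Fin 1) ℝ := fun _ _ => A (e (Sum.inr 0)) (e (Sum.inr 0)) with hDm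
    set X : Matrix (Fin n) (Fin 1) ℝ := L'⁻¹ * Bcol with hX
    set Y : Matrix (Fin 1) (Fin n) ℝ := Crow * U'⁻¹ with hY
    set Lb : Matrix (Fin n ⊕ Fin 1) (Fin n ⊕ Fin 1) ℝ := fromBlocks L' 0 Y 1 with hLb
    set Ub : Matrix (Fin n ⊕ Fin 1) (Fin n ⊕ Fin 1) ℝ := fromBlocks U' X 0 (Dm - Y * X) with hUb
    have hB : A.submatrix e e = fromBlocks A' Bcol Crow Dm := by
      ext i j
      cases i with
      | inl i => cases j with
        | inl j =>
          simp only [submatrix_apply, fromBlocks_apply₁₁, hA'def]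
          congr 1 <;> exact Fin.ext rfl
        | inr j =>
          simp only [submatrix_apply, fromBlocks_apply₁₂, hBcol]
          congr 1
          exact congrArg _ (congrArg _ (Subsingleton.elim _ _))
      | inr i => cases j with
        | inl j =>
          simp only [submatrix_apply, fromBlocks_apply₂₁, hCrow]
          congr 2
          exact congrArg _ (Subsingleton.elim _ _)
        | inr j =>
          simp only [submatrix_apply, fromBlocks_apply₂₂, hDm]
          congr 2 <;> exact congrArg _ (Subsingleton.elim _ _)
    have hLbUb : Lb * Ub = A.submatrix e e := by
      rw [hB, hLb, hUb, fromBlocks_multiply]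
      have h12 : L' * X = Bcol := by
        rw [hX, ← Matrix.mul_assoc, Matrix.mul_nonsing_inv _ hL'u, Matrix.one_mul]
      have h21 : Y * U' = Crow := by
        rw [hY, Matrix.mul_assoc, Matrix.nonsing_inv_mul _ hU'u, Matrix.mul_one]
      simp only [Matrix.zero_mul, Matrix.mul_zero, add_zero, Matrix.one_mul]
      rw [h12, h21, ← hA', show Y * X + (Dm - Y * X) = Dm from by abel]
    refine ⟨Lb.submatrix e.symm e.symm, Ub.submatrix e.symm e.symm, ?_, ?_, ?_, ?_, ?_⟩
    · intro i j hij
      obtain ⟨p, rfl⟩ : ∃ p, e p = i := ⟨e.symm i, e.apply_symm_apply i⟩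
      obtain ⟨q, rfl⟩ : ∃ q, e q = j := ⟨e.symm j, e.apply_symm_apply j⟩
      rw [submatrix_apply, e.symm_apply_apply, e.symm_apply_apply]
      rw [Fin.lt_def] at hij
      cases p with
      | inl p => cases q with
        | inl q =>
          simp only [he, finSumFinEquiv_apply_left, Fin.coe_castAdd] at hij
          exact hL't p q (Fin.lt_def.2 hij)
        | inr q => simp [hLb]
      | inr p => cases q with
        | inl q =>
          exfalso
          simp only [he, finSumFinEquiv_apply_left, finSumFinEquiv_apply_right,
            Fin.coe_castAdd, Fin.coe_natAdd] at hij
          omega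
        | inr q =>
          exfalso
          simp only [he, finSumFinEquiv_apply_right, Fin.coe_natAdd] at hij
          omega
    · intro i
      obtain ⟨p, rfl⟩ : ∃ p, e p = i := ⟨e.symm i, e.apply_symm_apply i⟩
      rw [submatrix_apply, e.symm_apply_apply]
      cases p with
      | inl p => exact hL'd p
      | inr p => simp [hLb]
    · intro i j hij
      obtain ⟨p, rfl⟩ : ∃ p, e p = i := ⟨e.symm i, e.apply_symm_apply i⟩
      obtain ⟨q, rfl⟩ : ∃ q, e q = j := ⟨e.symm j, e.apply_symm_apply j⟩
      rw [submatrix_apply, e.symm_apply_apply, e.symm_apply_apply]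
      rw [Fin.lt_def] at hij
      cases p with
      | inl p => cases q with
        | inl q =>
          simp only [he, finSumFinEquiv_apply_left, Fin.coe_castAdd] at hij
          exact hU't p q (Fin.lt_def.2 hij)
        | inr q =>
          exfalso
          simp only [he, finSumFinEquiv_apply_left, finSumFinEquiv_apply_right,
            Fin.coe_castAdd, Fin.coe_natAdd] at hij
          omega
      | inr p => cases q with
        | inl q => simp [hUb]
        | inr q =>
          exfalso
          simp only [he, finSumFinEquiv_apply_right, Fin.coe_natAdd] at hij
          omega
    · intro i
      obtain ⟨p, rfl⟩ : ∃ p, e p = i := ⟨e.symm i, e.apply_symm_apply i⟩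
      rw [submatrix_apply, e.symm_apply_apply]
      cases p with
      | inl p => exact hU'd p
      | inr p =>
        -- need (Dm - Y * X) p p ≠ 0 from det A ≠ 0
        have hdetA : A.det ≠ 0 := by
          have := hm (n + 1) le_rfl
          have hid : (Fin.castLE (le_refl (n + 1))) = (id : Fin (n+1) → Fin (n+1)) :=
            funext fun i => Fin.ext rfl
          rwa [hid, submatrix_id_id] at this
        have hdet : A.det = Lb.det * Ub.det := by
          have : A.det = (A.submatrix e e).det := (det_submatrix_equiv_self e A).symm
          rw [this, ← hLbUb, det_mul]
        have hdetLb : Lb.det = 1 := by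
          rw [hLb, det_fromBlocks_zero₁₂, hdetL', det_one, one_mul]
        have hdetUb : Ub.det = U'.det * (Dm - Y * X) 0 0 := by
          rw [hUb, det_fromBlocks_zero₂₁, det_fin_one]
        rw [hdet, hdetLb, one_mul, hdetUb] at hdetA
        have : (Dm - Y * X) 0 0 ≠ 0 := fun h => hdetA (by rw [h, mul_zero])
        rwa [show p = 0 from Subsingleton.elim p 0]
    · have : A = (A.submatrix e e).submatrix e.symm e.symm := by
        rw [submatrix_submatrix, Equiv.self_comp_symm, submatrix_id_id]
      rw [this, ← hLbUb, ← submatrix_mul_equiv Lb Ub _ e.symm _]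

/-- If all leading principal minors of a real `n × n` matrix `A` are nonzero,
there is a real diagonal matrix `D` such that all (complex) eigenvalues of
`D * A` have positive real part. -/
theorem exists_diagonal_stabilizing (n : ℕ) (A : Matrix (Fin n) (Fin n) ℝ)
    (hminors : ∀ k (h : k ≤ n),
      (A.submatrix (Fin.castLE h) (Fin.castLE h)).det ≠ 0) :
    ∃ d : Fin n → ℝ,
      ∀ μ ∈ spectrum ℂ ((Matrix.diagonal d * A).map (Complex.ofReal)),
        0 < μ.re := by
  rcases Nat.eq_zero_or_pos n with hn | hn
  · subst hn
    refine ⟨0, fun μ hμ => absurd hμ ?_⟩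
    have hsub : Subsingleton (Matrix (Fin 0) (Fin 0) ℂ) :=
      ⟨fun a b => by ext i; exact i.elim0⟩
    rw [spectrum.mem_iff, not_not]
    exact @isUnit_of_subsingleton _ _ hsub _
  obtain ⟨L, U, hLt, hLd, hUt, hUd, hA⟩ := exists_LU n A hminors
  have : Nonempty (Fin n) := ⟨⟨0, hn⟩⟩
  -- signs
  set s : Fin n → ℝ := fun k => if 0 ≤ U k k then 1 else -1 with hsdef
  have hs : ∀ k, s k * U k k = |U k k| := by
    intro k
    show (if 0 ≤ U k k then (1:ℝ) else -1) * U k k = |U k k|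
    split_ifs with h
    · rw [one_mul, abs_of_nonneg h]
    · rw [abs_of_neg (lt_of_not_ge h)]; ring
  have hsabs : ∀ k, |s k| = 1 := by
    intro k
    show |if 0 ≤ U k k then (1:ℝ) else -1| = 1
    split_ifs with h
    · exact abs_one
    · rw [abs_neg, abs_one]
  -- size bound
  set T : ℝ := (∑ i : Fin n, ∑ k : Fin n, ∑ j : Fin n, |U i k| * |L k j|) + 1 with hTdef
  have hT1 : (1:ℝ) ≤ T := by
    rw [hTdef]
    have : (0:ℝ) ≤ ∑ i : Fin n, ∑ k : Fin n, ∑ j : Fin n, |U i k| * |L k j| := by positivity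
    linarith
  have hT0 : (0:ℝ) < T := lt_of_lt_of_le one_pos hT1
  have hTb : ∀ i j : Fin n, (∑ k : Fin n, |U i k| * |L k j|) ≤ T := by
    intro i j
    have h1 : (∑ k : Fin n, |U i k| * |L k j|) ≤ ∑ k : Fin n, ∑ j' : Fin n, |U i k| * |L k j'| := by
      refine Finset.sum_le_sum fun k _ => ?_
      refine Finset.single_le_sum (f := fun j' => |U i k| * |L k j'|)
        (fun j' _ => by positivity) (Finset.mem_univ j)
    have h2 : (∑ k : Fin n, ∑ j' : Fin n, |U i k| * |L k j'|) ≤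
        ∑ i' : Fin n, ∑ k : Fin n, ∑ j' : Fin n, |U i' k| * |L k j'| := by
      refine Finset.single_le_sum (f := fun i' => ∑ k : Fin n, ∑ j' : Fin n, |U i' k| * |L k j'|)
        (fun i' _ => by positivity) (Finset.mem_univ i)
    rw [hTdef]; linarith
  -- minimum diagonal
  set m : ℝ := Finset.univ.inf' Finset.univ_nonempty (fun i : Fin n => |U i i|) with hmdef
  have hm0 : 0 < m := by
    rw [hmdef, Finset.lt_inf'_iff]
    exact fun i _ => abs_pos.mpr (hUd i)
  have hmle : ∀ i, m ≤ |U i i| := fun i => Finset.inf'_le _ (Finset.mem_univ i)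
  -- choose η
  set c : ℝ := (n + 1) * T with hcdef
  have hc0 : 0 < c := by
    rw [hcdef]
    exact mul_pos (by positivity) hT0
  set η : ℝ := min 1 (m / (c + 1)) with hηdef
  have hη0 : 0 < η := lt_min one_pos (div_pos hm0 (by linarith))
  have hη1 : η ≤ 1 := min_le_left _ _
  have hηm : c * η < m := by
    have h1 : η ≤ m / (c + 1) := min_le_right _ _
    have h2 : c * η ≤ c * (m / (c + 1)) := mul_le_mul_of_nonneg_left h1 hc0.le
    have h3 : c * (m / (c + 1)) < m := by
      rw [mul_div_assoc', div_lt_iff₀ (by linarith : (0:ℝ) < c + 1)]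
      nlinarith
    linarith
  have hηne : η ≠ 0 := hη0.ne'
  -- the diagonal
  set d : Fin n → ℝ := fun k => s k * η ^ (2 * (k : ℕ)) with hddef
  have hdne : ∀ k, d k ≠ 0 := by
    intro k
    rw [hddef]
    have hsne : s k ≠ 0 := by
      intro h; have := hsabs k; rw [h, abs_zero] at this; norm_num at this
    exact mul_ne_zero hsne (pow_ne_zero _ hηne)
  refine ⟨d, ?_⟩
  intro μ hμ
  -- scaled conjugated matrix
  set g : Fin n → ℝ := fun i => η ^ (i : ℕ) with hgdef
  set g' : Fin n → ℝ := fun i => (η ^ (i : ℕ))⁻¹ with hg'def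
  set N : Matrix (Fin n) (Fin n) ℝ :=
    diagonal g * (U * diagonal d * L) * diagonal g' with hNdef
  -- Step A: spectrum reduction
  have hdetL : L.det = 1 := by
    rw [Matrix.det_of_lowerTriangular L (fun i j hij => hLt i j hij)]
    simp [hLd]
  have hspec : μ ∈ spectrum ℂ (N.map (Complex.ofReal)) := by
    have hofReal : (Complex.ofReal : ℝ → ℂ) = ⇑Complex.ofRealHom := rfl
    have hmapmul : ∀ (P Q : Matrix (Fin n) (Fin n) ℝ),
        (P * Q).map (Complex.ofReal) = P.map Complex.ofReal * Q.map Complex.ofReal := by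
      intro P Q
      rw [hofReal]
      exact Matrix.map_mul
    -- P = (diagonal d * L) mapped
    set P : Matrix (Fin n) (Fin n) ℂ := (diagonal d * L).map Complex.ofReal with hPdef
    have hPunit : IsUnit P := by
      rw [Matrix.isUnit_iff_isUnit_det, hPdef, hofReal]
      rw [show (diagonal d * L).map ⇑Complex.ofRealHom
          = Complex.ofRealHom.mapMatrix (diagonal d * L) from rfl]
      rw [← RingHom.map_det]
      rw [det_mul, hdetL, mul_one, det_diagonal]
      refine (IsUnit.map _ ?_)
      exact isUnit_iff_ne_zero.2 (Finset.prod_ne_zero_iff.2 fun k _ => hdne k)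
    have h1 : (diagonal d * A).map Complex.ofReal = P * U.map Complex.ofReal := by
      rw [← hmapmul, hA, ← Matrix.mul_assoc]
    rw [h1] at hμ
    obtain ⟨u, hu⟩ := hPunit
    rw [← hu] at hμ
    have hswap : spectrum ℂ (u.val * U.map Complex.ofReal) =
        spectrum ℂ (U.map Complex.ofReal * u.val) := by
      have heq : (↑u⁻¹ : Matrix (Fin n) (Fin n) ℂ) * (u.val * U.map Complex.ofReal) * u.val =
          U.map Complex.ofReal * u.val := by
        rw [← Matrix.mul_assoc (↑u⁻¹ : Matrix (Fin n) (Fin n) ℂ) u.val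
          (U.map Complex.ofReal), Units.inv_mul, Matrix.one_mul]
      rw [← heq, spectrum.units_conjugate']
    rw [hswap, hu] at hμ
    have h2 : U.map Complex.ofReal * P = (U * diagonal d * L).map Complex.ofReal := by
      rw [hPdef, ← hmapmul, Matrix.mul_assoc]
    rw [h2] at hμ
    -- conjugate by diagonal g
    have hgg' : diagonal g * diagonal g' = (1 : Matrix (Fin n) (Fin n) ℝ) := by
      rw [diagonal_mul_diagonal]
      ext i j
      rcases eq_or_ne i j with rfl | hne
      · rw [diagonal_apply_eq, Matrix.one_apply_eq]
        exact mul_inv_cancel₀ (pow_ne_zero _ hηne)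
      · rw [diagonal_apply_ne _ hne, Matrix.one_apply_ne hne]
    have hg'g : diagonal g' * diagonal g = (1 : Matrix (Fin n) (Fin n) ℝ) := by
      rw [diagonal_mul_diagonal]
      ext i j
      rcases eq_or_ne i j with rfl | hne
      · rw [diagonal_apply_eq, Matrix.one_apply_eq]
        exact inv_mul_cancel₀ (pow_ne_zero _ hηne)
      · rw [diagonal_apply_ne _ hne, Matrix.one_apply_ne hne]
    have hmapone : (1 : Matrix (Fin n) (Fin n) ℝ).map Complex.ofReal = 1 :=
      Matrix.map_one _ Complex.ofReal_zero Complex.ofReal_one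
    set G : (Matrix (Fin n) (Fin n) ℂ)ˣ :=
      ⟨(diagonal g).map Complex.ofReal, (diagonal g').map Complex.ofReal,
        by rw [← hmapmul, hgg', hmapone], by rw [← hmapmul, hg'g, hmapone]⟩ with hGdef
    have : N.map Complex.ofReal =
        G.val * (U * diagonal d * L).map Complex.ofReal * (G⁻¹).val := by
      rw [hNdef, hmapmul, hmapmul]
      rfl
    rw [this, spectrum.units_conjugate]
    exact hμ
  -- Step B: Gershgorin
  have heig : Module.End.HasEigenvalue (Matrix.toLin' (N.map Complex.ofReal)) μ := by
    have hspec2 : spectrum ℂ (Matrix.toLinAlgEquiv' (N.map Complex.ofReal)) =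
        spectrum ℂ (N.map Complex.ofReal) := AlgEquiv.spectrum_eq _ _
    have hEq : Matrix.toLinAlgEquiv' (N.map Complex.ofReal) =
        Matrix.toLin' (N.map Complex.ofReal) := by
      apply LinearMap.ext
      intro v
      rw [Matrix.toLinAlgEquiv'_apply, Matrix.toLin'_apply]
    have hmem : μ ∈ spectrum ℂ (Matrix.toLinAlgEquiv' (N.map Complex.ofReal)) := by
      rw [hspec2]; exact hspec
    rw [hEq] at hmem
    exact Module.End.hasEigenvalue_iff_mem_spectrum.mpr hmem
  obtain ⟨k, hk⟩ := eigenvalue_mem_ball heig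
  -- Step C: entry estimates
  have hNentry : ∀ i j, N i j = ∑ l : Fin n, g i * (U i l * d l * L l j) * g' j := by
    intro i j
    rw [hNdef, Matrix.mul_diagonal, Matrix.diagonal_mul, Matrix.mul_apply]
    rw [Finset.mul_sum, Finset.sum_mul]
    refine Finset.sum_congr rfl fun l _ => ?_
    rw [Matrix.mul_diagonal]
  have hterm : ∀ (i j l : Fin n), ¬(j = i ∧ l = i) →
      |g i * (U i l * d l * L l j) * g' j| ≤ |U i l| * |L l j| * η ^ (2 * (i:ℕ) + 1) := by
    intro i j l hnot
    by_cases hU0 : U i l = 0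
    · have hz : g i * (U i l * d l * L l j) * g' j = 0 := by rw [hU0]; ring
      rw [hz, abs_zero]
      exact mul_nonneg (mul_nonneg (abs_nonneg _) (abs_nonneg _)) (pow_nonneg hη0.le _)
    by_cases hL0 : L l j = 0
    · have hz : g i * (U i l * d l * L l j) * g' j = 0 := by rw [hL0]; ring
      rw [hz, abs_zero]
      exact mul_nonneg (mul_nonneg (abs_nonneg _) (abs_nonneg _)) (pow_nonneg hη0.le _)
    have hil : (i : ℕ) ≤ (l : ℕ) := by
      by_contra h
      exact hU0 (hUt i l (Fin.lt_def.2 (Nat.lt_of_not_le h)))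
    have hjl : (j : ℕ) ≤ (l : ℕ) := by
      by_contra h
      exact hL0 (hLt l j (Fin.lt_def.2 (Nat.lt_of_not_le h)))
    have hnot' : ¬((j:ℕ) = (i:ℕ) ∧ (l:ℕ) = (i:ℕ)) :=
      fun ⟨h1, h2⟩ => hnot ⟨Fin.ext h1, Fin.ext h2⟩
    have habs : |g i * (U i l * d l * L l j) * g' j| =
        |U i l| * |L l j| * (η ^ (i:ℕ) * η ^ (2 * (l:ℕ)) * (η ^ (j:ℕ))⁻¹) := by
      rw [hgdef, hg'def, hddef]
      simp only [abs_mul, abs_inv, abs_pow, abs_of_pos hη0, hsabs]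
      ring
    have hpow : η ^ (i:ℕ) * η ^ (2 * (l:ℕ)) * (η ^ (j:ℕ))⁻¹ =
        η ^ ((i:ℕ) + 2 * (l:ℕ) - (j:ℕ)) := by
      rw [← pow_add, ← div_eq_mul_inv]
      exact (pow_sub₀ η hηne (by omega)).symm
    have hexp : 2 * (i:ℕ) + 1 ≤ (i:ℕ) + 2 * (l:ℕ) - (j:ℕ) := by omega
    have hppow : η ^ ((i:ℕ) + 2 * (l:ℕ) - (j:ℕ)) ≤ η ^ (2 * (i:ℕ) + 1) :=
      pow_le_pow_of_le_one hη0.le hη1 hexp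
    rw [habs, hpow]
    have : (0:ℝ) ≤ |U i l| * |L l j| := by positivity
    exact mul_le_mul_of_nonneg_left hppow this
  have claim : ∀ i j, |N i j - (if j = i then |U i i| * η ^ (2 * (i:ℕ)) else 0)| ≤
      T * η ^ (2 * (i:ℕ) + 1) := by
    intro i j
    rw [hNentry]
    by_cases hji : j = i
    · subst hji
      rw [if_pos rfl]
      have hsplit : (∑ l : Fin n, g j * (U j l * d l * L l j) * g' j) =
          g j * (U j j * d j * L j j) * g' j +
            ∑ l ∈ Finset.univ.erase j, g j * (U j l * d l * L l j) * g' j :=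
        (Finset.add_sum_erase _ _ (Finset.mem_univ j)).symm
      have hmain : g j * (U j j * d j * L j j) * g' j = |U j j| * η ^ (2 * (j:ℕ)) := by
        rw [hgdef, hg'def, hddef, hLd j]
        field_simp
        rw [← hs j]
        ring
      rw [hsplit, hmain, add_sub_cancel_left]
      calc |∑ l ∈ Finset.univ.erase j, g j * (U j l * d l * L l j) * g' j|
          ≤ ∑ l ∈ Finset.univ.erase j, |g j * (U j l * d l * L l j) * g' j| :=
            Finset.abs_sum_le_sum_abs _ _
        _ ≤ ∑ l ∈ Finset.univ.erase j, |U j l| * |L l j| * η ^ (2 * (j:ℕ) + 1) :=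
            Finset.sum_le_sum fun l hl =>
              hterm j j l (fun ⟨_, h2⟩ => (Finset.ne_of_mem_erase hl) h2)
        _ ≤ ∑ l : Fin n, |U j l| * |L l j| * η ^ (2 * (j:ℕ) + 1) :=
            Finset.sum_le_sum_of_subset_of_nonneg (Finset.erase_subset _ _)
              (fun l _ _ => mul_nonneg (mul_nonneg (abs_nonneg _) (abs_nonneg _))
                (pow_nonneg hη0.le _))
        _ = (∑ l : Fin n, |U j l| * |L l j|) * η ^ (2 * (j:ℕ) + 1) := by
            rw [Finset.sum_mul]
        _ ≤ T * η ^ (2 * (j:ℕ) + 1) :=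
            mul_le_mul_of_nonneg_right (hTb j j) (pow_nonneg hη0.le _)
    · rw [if_neg hji, sub_zero]
      calc |∑ l : Fin n, g i * (U i l * d l * L l j) * g' j|
          ≤ ∑ l : Fin n, |g i * (U i l * d l * L l j) * g' j| :=
            Finset.abs_sum_le_sum_abs _ _
        _ ≤ ∑ l : Fin n, |U i l| * |L l j| * η ^ (2 * (i:ℕ) + 1) :=
            Finset.sum_le_sum fun l _ => hterm i j l (fun ⟨h1, _⟩ => hji h1)
        _ = (∑ l : Fin n, |U i l| * |L l j|) * η ^ (2 * (i:ℕ) + 1) := by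
            rw [Finset.sum_mul]
        _ ≤ T * η ^ (2 * (i:ℕ) + 1) :=
            mul_le_mul_of_nonneg_right (hTb i j) (pow_nonneg hη0.le _)
  -- Step D: conclude
  have hdiag : |U k k| * η ^ (2 * (k:ℕ)) - T * η ^ (2 * (k:ℕ) + 1) ≤ N k k := by
    have := claim k k
    rw [if_pos rfl] at this
    have := abs_le.1 this
    linarith [this.1]
  have hrow : (∑ j ∈ Finset.univ.erase k, |N k j|) ≤ (n:ℝ) * (T * η ^ (2 * (k:ℕ) + 1)) := by
    calc (∑ j ∈ Finset.univ.erase k, |N k j|)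
        ≤ ∑ j ∈ Finset.univ.erase k, T * η ^ (2 * (k:ℕ) + 1) := by
          refine Finset.sum_le_sum fun j hj => ?_
          have := claim k j
          rw [if_neg (Finset.ne_of_mem_erase hj), sub_zero] at this
          exact this
      _ = ((Finset.univ.erase k).card : ℝ) * (T * η ^ (2 * (k:ℕ) + 1)) := by
          rw [Finset.sum_const, nsmul_eq_mul]
      _ ≤ (n:ℝ) * (T * η ^ (2 * (k:ℕ) + 1)) := by
          refine mul_le_mul_of_nonneg_right ?_
            (mul_nonneg hT0.le (pow_nonneg hη0.le _))
          have h1 : (Finset.univ.erase k).card ≤ (Finset.univ : Finset (Fin n)).card :=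
            Finset.card_le_card (Finset.erase_subset _ _)
          rw [Finset.card_univ, Fintype.card_fin] at h1
          exact_mod_cast h1
  -- Gershgorin ball unpacking
  rw [Metric.mem_closedBall, dist_eq_norm] at hk
  have hknorm : ∀ j, ‖(N.map Complex.ofReal) k j‖ = |N k j| := by
    intro j
    rw [Matrix.map_apply, Complex.norm_real, Real.norm_eq_abs]
  have hkc : (N.map Complex.ofReal) k k = ((N k k : ℝ) : ℂ) := Matrix.map_apply
  have hre : N k k - ∑ j ∈ Finset.univ.erase k, |N k j| ≤ μ.re := by
    have h1 : ‖μ - ((N k k : ℝ) : ℂ)‖ ≤ ∑ j ∈ Finset.univ.erase k, |N k j| := by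
      rw [← hkc]
      refine le_trans hk ?_
      refine le_of_eq (Finset.sum_congr rfl fun j _ => hknorm j)
    have h2 : |(μ - ((N k k : ℝ) : ℂ)).re| ≤ ‖μ - ((N k k : ℝ) : ℂ)‖ := by
      exact Complex.abs_re_le_norm _
    have h3 : (μ - ((N k k : ℝ) : ℂ)).re = μ.re - N k k := by
      simp [Complex.sub_re, Complex.ofReal_re]
    rw [h3] at h2
    have h4 := abs_le.1 (le_trans h2 h1)
    linarith [h4.1]
  -- final arithmetic
  have hfinal : 0 < N k k - ∑ j ∈ Finset.univ.erase k, |N k j| := by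
    have hpow0 : (0:ℝ) < η ^ (2 * (k:ℕ)) := pow_pos hη0 _
    have hstep : η ^ (2 * (k:ℕ) + 1) = η ^ (2 * (k:ℕ)) * η := by rw [pow_succ]
    have hck : (1 + (n:ℝ)) * T * η < m := by
      have : (1 + (n:ℝ)) * T = c := by rw [hcdef]; ring
      rw [this]; exact hηm
    have hmk := hmle k
    have h5 : N k k - ∑ j ∈ Finset.univ.erase k, |N k j| ≥
        η ^ (2 * (k:ℕ)) * (|U k k| - (1 + (n:ℝ)) * T * η) := by
      have := hrow
      rw [hstep] at hdiag this
      nlinarith [hdiag, this]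
    have h6 : 0 < |U k k| - (1 + (n:ℝ)) * T * η := by linarith
    nlinarith [h5, h6, hpow0]
  linarith
end
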